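/- Suppose gcd(β_1,...,β_s, γ_j − γ_k for 1 ≤ j < k ≤ t) = 1. Then for every real φ, P(e^{iφ}) ≥ 0, and P(e^{iφ}) = 0 if and only if e^{iφ} = 1. -/
import Mathlib


open Complex

theorem stmt8 (s t : ℕ) (ht : 1 ≤ t) (β : Fin s → ℕ) (hβpos : ∀ i, 0 < β i)
    (γ : Fin t → ℕ) (A B P : ℂ → ℂ)
    (hA : ∀ z : ℂ, A z = (2 * s + t : ℂ) - ∑ i, (z ^ (β i : ℤ) + z ^ (-(β i : ℤ))))
    (hB : ∀ z : ℂ, B z = -∑ j, z ^ (γ j : ℤ))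
    (hP : ∀ z : ℂ, z ≠ 0 → P z = A z * A z⁻¹ - B z * B z⁻¹)
    (hgcd : GCDMonoid.gcd ((Finset.univ : Finset (Fin s)).gcd fun i => (β i : ℤ))
        (((Finset.univ : Finset (Fin t × Fin t)).filter fun p => p.1 < p.2).gcd
          fun p => (γ p.1 : ℤ) - (γ p.2 : ℤ)) = 1) :
    ∀ φ : ℝ,
      (P (Complex.exp (φ * Complex.I))).im = 0 ∧
      0 ≤ (P (Complex.exp (φ * Complex.I))).re ∧
      (P (Complex.exp (φ * Complex.I)) = 0 ↔ Complex.exp (φ * Complex.I) = 1) := by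
  intro φ
  set z : ℂ := Complex.exp (φ * Complex.I) with hzdef
  have hz0 : z ≠ 0 := Complex.exp_ne_zero _
  have hpow : ∀ n : ℤ, z ^ n = Complex.exp ((((n:ℝ)*φ : ℝ) : ℂ) * Complex.I) := by
    intro n; rw [hzdef, ← Complex.exp_int_mul]; congr 1; push_cast; ring
  have hcos : ∀ θ : ℝ, Complex.exp ((θ:ℂ) * Complex.I) + Complex.exp (((-θ:ℝ):ℂ) * Complex.I)
      = ((2*Real.cos θ : ℝ) : ℂ) := by
    intro θ
    rw [Complex.exp_mul_I, Complex.exp_mul_I]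
    push_cast
    simp [Complex.cos_neg, Complex.sin_neg]
    ring
  have hconj : ∀ θ : ℝ, (starRingEnd ℂ) (Complex.exp ((θ:ℂ) * Complex.I))
      = Complex.exp (((-θ:ℝ):ℂ) * Complex.I) := by
    intro θ; rw [← Complex.exp_conj]; congr 1; simp
  have hzinv : z⁻¹ = Complex.exp (((-φ:ℝ):ℂ) * Complex.I) := by
    rw [hzdef, ← Complex.exp_neg]; congr 1; push_cast; ring
  -- value of A at z and z⁻¹
  set a : ℝ := 2*s + t - ∑ i, 2*Real.cos ((β i : ℝ)*φ) with ha
  have hpow' : ∀ (ψ : ℝ) (n : ℤ), (Complex.exp ((ψ:ℂ) * Complex.I)) ^ n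
      = Complex.exp ((((n:ℝ)*ψ : ℝ) : ℂ) * Complex.I) := by
    intro ψ n; rw [← Complex.exp_int_mul]; congr 1; push_cast; ring
  have hAgen : ∀ ψ : ℝ, A (Complex.exp ((ψ:ℂ) * Complex.I))
      = ((2*s + t - ∑ i, 2*Real.cos ((β i : ℝ)*ψ) : ℝ) : ℂ) := by
    intro ψ
    rw [hA]
    have : ∀ i : Fin s, (Complex.exp ((ψ:ℂ) * Complex.I)) ^ (β i : ℤ)
        + (Complex.exp ((ψ:ℂ) * Complex.I)) ^ (-(β i : ℤ))
        = ((2*Real.cos ((β i : ℝ)*ψ) : ℝ) : ℂ) := by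
      intro i
      rw [hpow', hpow', ← hcos ((β i : ℝ)*ψ)]
      push_cast
      ring_nf
    rw [Finset.sum_congr rfl fun i _ => this i]
    push_cast
    ring
  have hAz : A z = (a : ℂ) := by rw [hzdef, hAgen φ, ha]
  have hAzinv : A z⁻¹ = (a : ℂ) := by
    have hre : (2*s + t - ∑ i, 2*Real.cos ((β i : ℝ)*(-φ)) : ℝ) = a := by
      rw [ha]
      congr 1
      refine Finset.sum_congr rfl fun i _ => ?_
      rw [show (β i : ℝ) * -φ = -((β i : ℝ)*φ) by ring, Real.cos_neg]
    rw [hzinv, hAgen (-φ), hre]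
  -- B at z⁻¹ is the conjugate of B at z
  have hBconj : B z⁻¹ = (starRingEnd ℂ) (B z) := by
    rw [hB, hB, map_neg, map_sum]
    congr 1
    apply Finset.sum_congr rfl
    intro j _
    have h1 : z ^ (γ j : ℤ) = Complex.exp ((((γ j : ℝ)*φ : ℝ) : ℂ) * Complex.I) := by
      rw [hpow]; push_cast; ring_nf
    have h2 : z⁻¹ ^ (γ j : ℤ) = Complex.exp ((((γ j : ℝ)*(-φ) : ℝ) : ℂ) * Complex.I) := by
      rw [hzinv, ← Complex.exp_int_mul]; congr 1; push_cast; ring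
    rw [h1, h2, hconj]
    congr 2
    push_cast
    ring
  -- normSq of B z as a sum of cosines
  have hBz : B z = -∑ j, Complex.exp ((((γ j : ℝ)*φ : ℝ) : ℂ) * Complex.I) := by
    rw [hB]
    congr 1
    refine Finset.sum_congr rfl fun j _ => ?_
    rw [hpow]; push_cast; ring_nf
  have hnormSq : (Complex.normSq (B z) : ℝ)
      = ∑ p : Fin t × Fin t, Real.cos (((γ p.1 : ℝ) - (γ p.2 : ℝ))*φ) := by
    have key : ((Complex.normSq (B z) : ℝ) : ℂ)
        = ∑ p : Fin t × Fin t, Complex.exp (((((γ p.1 : ℝ) - (γ p.2 : ℝ))*φ : ℝ) : ℂ) * Complex.I) := by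
      rw [← Complex.mul_conj, hBz, map_neg, map_sum, neg_mul_neg, Finset.sum_mul_sum]
      rw [← Finset.sum_product', ← Finset.univ_product_univ]
      apply Finset.sum_congr rfl
      intro p _
      rw [hconj, ← Complex.exp_add]
      congr 1
      push_cast
      ring
    have h := congrArg Complex.re key
    rw [Complex.ofReal_re, Complex.re_sum] at h
    rw [h]
    exact Finset.sum_congr rfl fun p _ => Complex.exp_ofReal_mul_I_re _
  -- nonnegative error sums
  set S1 : ℝ := ∑ i, (1 - Real.cos ((β i : ℝ)*φ)) with hS1
  set S2 : ℝ := ∑ p : Fin t × Fin t, (1 - Real.cos (((γ p.1 : ℝ) - (γ p.2 : ℝ))*φ)) with hS2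
  have hS1nn : 0 ≤ S1 := Finset.sum_nonneg fun i _ => by
    have := Real.cos_le_one ((β i : ℝ)*φ); linarith
  have hS2nn : 0 ≤ S2 := Finset.sum_nonneg fun p _ => by
    have := Real.cos_le_one (((γ p.1 : ℝ) - (γ p.2 : ℝ))*φ); linarith
  have hs1' : S1 = s - ∑ i, Real.cos ((β i : ℝ)*φ) := by
    rw [hS1, Finset.sum_sub_distrib, Finset.sum_const, Finset.card_univ, Fintype.card_fin]
    simp
  have hs2' : S2 = (t:ℝ)^2 - ∑ p : Fin t × Fin t, Real.cos (((γ p.1 : ℝ) - (γ p.2 : ℝ))*φ) := by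
    rw [hS2, Finset.sum_sub_distrib, Finset.sum_const, Finset.card_univ, Fintype.card_prod,
      Fintype.card_fin]
    congr 1
    simp [nsmul_eq_mul]
    push_cast
    ring
  have hsum2 : ∑ i, 2*Real.cos ((β i : ℝ)*φ) = 2 * ∑ i, Real.cos ((β i : ℝ)*φ) := by
    rw [Finset.mul_sum]
  have haS1 : a = t + 2*S1 := by rw [ha, hsum2]; linarith [hs1']
  have hnS2 : (Complex.normSq (B z) : ℝ) = (t:ℝ)^2 - S2 := by rw [hnormSq]; linarith [hs2']
  have ht1 : (1:ℝ) ≤ t := by exact_mod_cast ht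
  have hPz : P z = ((a^2 - Complex.normSq (B z) : ℝ) : ℂ) := by
    rw [hP z hz0, hAz, hAzinv, hBconj, Complex.mul_conj]
    push_cast
    ring
  refine ⟨by rw [hPz]; exact Complex.ofReal_im _, ?_, ?_⟩
  · rw [hPz, Complex.ofReal_re, haS1, hnS2]
    nlinarith [hS1nn, hS2nn, ht1]
  constructor
  · intro h0
    rw [hPz, Complex.ofReal_eq_zero, haS1, hnS2] at h0
    have hS1z : S1 = 0 := by nlinarith [hS1nn, hS2nn, ht1]
    have hS2z : S2 = 0 := by nlinarith [hS1nn, hS2nn, ht1]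
    have hcb : ∀ i : Fin s, Real.cos ((β i : ℝ)*φ) = 1 := by
      intro i
      have := (Finset.sum_eq_zero_iff_of_nonneg (fun i _ => by
        have := Real.cos_le_one ((β i : ℝ)*φ); linarith)).mp (hS1 ▸ hS1z) i (Finset.mem_univ i)
      linarith
    have hcg : ∀ p : Fin t × Fin t, Real.cos (((γ p.1 : ℝ) - (γ p.2 : ℝ))*φ) = 1 := by
      intro p
      have := (Finset.sum_eq_zero_iff_of_nonneg (fun p _ => by
        have := Real.cos_le_one (((γ p.1 : ℝ) - (γ p.2 : ℝ))*φ); linarith)).mp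
        (hS2 ▸ hS2z) p (Finset.mem_univ p)
      linarith
    have hzb : ∀ i : Fin s, z ^ ((β i : ℕ) : ℤ) = 1 := by
      intro i
      obtain ⟨n, hn⟩ := (Real.cos_eq_one_iff _).mp (hcb i)
      rw [hpow, Complex.exp_eq_one_iff]
      refine ⟨n, ?_⟩
      have harg : ((((β i : ℕ) : ℤ) : ℝ) * φ : ℝ) = (n : ℝ) * (2 * Real.pi) := by
        push_cast; push_cast at hn; linarith
      rw [harg]
      push_cast
      ring
    have hzg : ∀ p : Fin t × Fin t, z ^ ((γ p.1 : ℤ) - (γ p.2 : ℤ)) = 1 := by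
      intro p
      obtain ⟨n, hn⟩ := (Real.cos_eq_one_iff _).mp (hcg p)
      rw [hpow, Complex.exp_eq_one_iff]
      refine ⟨n, ?_⟩
      have harg : (((((γ p.1 : ℤ) - (γ p.2 : ℤ) : ℤ)) : ℝ) * φ : ℝ) = (n : ℝ) * (2 * Real.pi) := by
        push_cast; push_cast at hn; linarith
      rw [harg]
      push_cast
      ring
    -- the set of exponents n with z ^ n = 1 is a subgroup of ℤ
    let H : AddSubgroup ℤ :=
      { carrier := {n : ℤ | z ^ n = 1}
        zero_mem' := by simp
        add_mem' := by
          intro x y hx hy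
          simp only [Set.mem_setOf_eq] at *
          rw [zpow_add₀ hz0, hx, hy, one_mul]
        neg_mem' := by
          intro x hx
          simp only [Set.mem_setOf_eq] at *
          rw [zpow_neg, hx, inv_one] }
    obtain ⟨d, hd⟩ := Int.subgroup_cyclic H
    have hmem : ∀ n : ℤ, z ^ n = 1 ↔ d ∣ n := by
      intro n
      constructor
      · intro h
        have hn : n ∈ H := h
        rw [hd, AddSubgroup.mem_closure_singleton] at hn
        obtain ⟨k, hk⟩ := hn
        exact ⟨k, by rw [← hk, smul_eq_mul]; ring⟩
      · rintro ⟨k, hk⟩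
        have hn : n ∈ H := by
          rw [hd, AddSubgroup.mem_closure_singleton]
          exact ⟨k, by rw [smul_eq_mul, hk]; ring⟩
        exact hn
    have hdvd1 : d ∣ 1 := by
      rw [← hgcd]
      apply dvd_gcd
      · exact Finset.dvd_gcd fun i _ => (hmem _).mp (hzb i)
      · exact Finset.dvd_gcd fun p _ => (hmem _).mp (hzg p)
    have := (hmem 1).mpr hdvd1
    simpa using this
  · intro h1
    rw [hP z hz0, h1]
    simp [hA, hB]
    push_cast
    ring
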